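/- Let R be a GCR ring. Then two simple left R-modules M and N are isomorphic as R-modules if and only if their annihilators in R are equal. -/

import Mathlib

/-- A ring is (left) primitive if it admits a faithful simple left module. -/
def IsPrimitiveRing (R : Type u) [Ring R] : Prop :=
  ∃ (M : Type u) (_ : AddCommGroup M) (_ : Module R M), IsSimpleModule R M ∧ FaithfulSMul R M

/-- A ring has a minimal left ideal if there is an atom in its lattice of left ideals. -/
def HasMinimalLeftIdeal (R : Type u) [Ring R] : Prop :=
  ∃ L : Submodule R R, IsAtom L

/-- A ring is GCR if every primitive quotient has a minimal left ideal. -/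
def IsGCRRing (R : Type u) [Ring R] : Prop :=
  ∀ P : TwoSidedIdeal R, IsPrimitiveRing P.ringCon.Quotient →
    HasMinimalLeftIdeal P.ringCon.Quotient

section Aux

lemma ann_eq_of_equiv {R : Type*} [Ring R] {M N : Type*} [AddCommGroup M] [Module R M]
    [AddCommGroup N] [Module R N] (e : M ≃ₗ[R] N) :
    Module.annihilator R M = Module.annihilator R N := by
  ext r
  simp only [Module.mem_annihilator]
  constructor
  · intro h n
    have h1 : e (r • e.symm n) = e 0 := by rw [h (e.symm n), map_zero]
    rw [map_smul, e.apply_symm_apply, map_zero] at h1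
    exact h1
  · intro h m
    apply e.injective
    rw [map_smul, h (e m), map_zero]

/-- In a ring with a minimal left ideal `L`, every faithful simple module is isomorphic
to `L`. -/
lemma atom_equiv_simple {S : Type*} [Ring S] {L : Submodule S S} (hL : IsAtom L)
    {X : Type*} [AddCommGroup X] [Module S X] (hX : IsSimpleModule S X)
    (hf : FaithfulSMul S X) :
    Nonempty (L ≃ₗ[S] X) := by
  obtain ⟨a, haL, ha0⟩ := Submodule.exists_mem_ne_zero_of_ne_bot hL.1
  have hm : ∃ m : X, a • m ≠ 0 := by
    by_contra hc
    push_neg at hc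
    exact ha0 (hf.eq_of_smul_eq_smul (m₂ := (0 : S)) (fun m => by rw [hc m, zero_smul]))
  obtain ⟨m, hm⟩ := hm
  let f : L →ₗ[S] X :=
    { toFun := fun x => x.1 • m
      map_add' := fun x y => by simp [add_smul]
      map_smul' := fun s x => by simp [mul_smul] }
  have hfa : f ⟨a, haL⟩ ≠ 0 := hm
  have hsurj : Function.Surjective f := by
    rw [← LinearMap.range_eq_top]
    rcases hX.1.eq_bot_or_eq_top (LinearMap.range f) with h | h
    · exfalso
      apply hfa
      have hmem := LinearMap.mem_range_self f ⟨a, haL⟩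
      rw [h, Submodule.mem_bot] at hmem
      exact hmem
    · exact h
  have hinj : Function.Injective f := by
    rw [← LinearMap.ker_eq_bot]
    have hKle : (LinearMap.ker f).map L.subtype ≤ L := Submodule.map_subtype_le L _
    have hKne : (LinearMap.ker f).map L.subtype ≠ L := by
      intro hEq
      have hamem : a ∈ (LinearMap.ker f).map L.subtype := by rw [hEq]; exact haL
      obtain ⟨x, hx, hxa⟩ := hamem
      apply hfa
      have hxe : x = ⟨a, haL⟩ := Subtype.ext hxa
      rw [← hxe]; exact hx
    have hbot : (LinearMap.ker f).map L.subtype = ⊥ := hL.2 _ (lt_of_le_of_ne hKle hKne)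
    rw [Submodule.eq_bot_iff]
    intro x hx
    have hx1 : x.1 ∈ (LinearMap.ker f).map L.subtype := ⟨x, hx, rfl⟩
    rw [hbot, Submodule.mem_bot] at hx1
    exact Subtype.ext hx1
  exact ⟨LinearEquiv.ofBijective f ⟨hinj, hsurj⟩⟩

end Aux

section QuotMod

variable {R : Type*} [Ring R] (I : TwoSidedIdeal R) (X : Type*) [AddCommGroup X] [Module R X]

/-- The scalar action of the quotient ring on a module killed by the ideal. -/
def qsmul (hX : ∀ r ∈ I, ∀ x : X, r • x = 0) : I.ringCon.Quotient → X → X := fun q x =>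
  Quotient.liftOn q (fun r => r • x) (fun a b hab => by
    have h0 : (a - b) • x = 0 := hX _ ((I.rel_iff a b).mp hab) x
    rw [sub_smul, sub_eq_zero] at h0
    exact h0)

/-- The module structure of the quotient ring on a module killed by the ideal. -/
def qmodule (hX : ∀ r ∈ I, ∀ x : X, r • x = 0) : Module I.ringCon.Quotient X where
  smul := qsmul I X hX
  one_smul x := one_smul R x
  mul_smul q₁ q₂ x := by
    refine Quotient.inductionOn₂ q₁ q₂ (fun a b => ?_)
    exact mul_smul a b x
  smul_zero q := by
    refine Quotient.inductionOn q (fun a => ?_)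
    exact smul_zero a
  smul_add q x y := by
    refine Quotient.inductionOn q (fun a => ?_)
    exact smul_add a x y
  add_smul q₁ q₂ x := by
    refine Quotient.inductionOn₂ q₁ q₂ (fun a b => ?_)
    exact add_smul a b x
  zero_smul x := zero_smul R x

lemma qmodule_isSimple (hX : ∀ r ∈ I, ∀ x : X, r • x = 0) (hs : IsSimpleModule R X) :
    @IsSimpleModule I.ringCon.Quotient _ X _ (qmodule I X hX) := by
  letI := qmodule I X hX
  haveI := hs
  haveI : Nontrivial X := IsSimpleModule.nontrivial R X
  refine (isSimpleModule_iff _ _).mpr ?_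
  constructor
  intro p
  let p' : Submodule R X :=
    { carrier := (p : Set X)
      add_mem' := fun ha hb => p.add_mem ha hb
      zero_mem' := p.zero_mem
      smul_mem' := fun r x hx => p.smul_mem (RingCon.mk' I.ringCon r) hx }
  have hcar : ∀ x : X, x ∈ p' ↔ x ∈ p := fun x => Iff.rfl
  rcases hs.1.eq_bot_or_eq_top p' with hb | ht
  · left
    rw [eq_bot_iff]
    intro x hx
    have hx' : x ∈ p' := (hcar x).mpr hx
    rw [hb] at hx'
    simpa using hx'
  · right
    rw [eq_top_iff]
    intro x _
    have hx' : x ∈ p' := by rw [ht]; trivial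
    exact (hcar x).mp hx'

lemma qmodule_faithful (hX : ∀ r ∈ I, ∀ x : X, r • x = 0)
    (hann : ∀ r : R, (∀ x : X, r • x = 0) → r ∈ I) :
    @FaithfulSMul I.ringCon.Quotient X
      (qmodule I X hX).toDistribMulAction.toMulAction.toSMul := by
  letI := qmodule I X hX
  constructor
  intro q₁ q₂ hq
  refine Quotient.inductionOn₂ q₁ q₂ (fun a b => ?_) hq
  intro hab
  apply Quotient.sound
  show I.ringCon a b
  rw [I.rel_iff]
  apply hann
  intro x
  have h2 : a • x = b • x := hab x
  rw [sub_smul, h2, sub_self]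

end QuotMod


/-- Let `R` be a GCR ring.  Two simple left `R`-modules are isomorphic if and only if they
have the same annihilator. -/
theorem gcr_simple_iso_iff_annihilator_eq (R : Type u) [Ring R] (hR : IsGCRRing R)
    (M : Type v) [AddCommGroup M] [Module R M] (hM : IsSimpleModule R M)
    (N : Type w) [AddCommGroup N] [Module R N] (hN : IsSimpleModule R N) :
    Nonempty (M ≃ₗ[R] N) ↔ Module.annihilator R M = Module.annihilator R N := by
  constructor
  · rintro ⟨e⟩; exact ann_eq_of_equiv e
  · intro h
    -- the common annihilator as a two-sided ideal
    set P : TwoSidedIdeal R := TwoSidedIdeal.mk' (Module.annihilator R M)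
      (zero_mem _) (fun hx hy => add_mem hx hy) (fun hx => neg_mem hx)
      (fun {x y} hy => Module.mem_annihilator.mpr fun m => by
        rw [mul_smul, Module.mem_annihilator.mp hy, smul_zero])
      (fun {x y} hx => Module.mem_annihilator.mpr fun m => by
        rw [mul_smul, Module.mem_annihilator.mp hx]) with hP
    have memP : ∀ r : R, r ∈ P ↔ r ∈ Module.annihilator R M := fun r =>
      TwoSidedIdeal.mem_mk' _ _ _ _ _ _ r
    set Q := P.ringCon.Quotient with hQ
    let π : R →+* Q := RingCon.mk' P.ringCon
    -- action of Q on an R-module killed by P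
    have smulM : ∀ r : R, ∀ m : M, r ∈ P → r • m = 0 := fun r m hr =>
      Module.mem_annihilator.mp ((memP r).mp hr) m
    have smulN : ∀ r : R, ∀ n : N, r ∈ P → r • n = 0 := fun r n hr =>
      Module.mem_annihilator.mp (h ▸ (memP r).mp hr) n
    -- Q-module structures
    letI instQM : Module Q M := qmodule P M (fun r hr m => smulM r m hr)
    letI instQN : Module Q N := qmodule P N (fun r hr n => smulN r n hr)
    haveI sM : IsSimpleModule Q M := qmodule_isSimple P M _ hM
    haveI sN : IsSimpleModule Q N := qmodule_isSimple P N _ hN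
    haveI fM : FaithfulSMul Q M := qmodule_faithful P M _
      (fun r hr => (memP r).mpr (Module.mem_annihilator.mpr hr))
    haveI fN : FaithfulSMul Q N := qmodule_faithful P N _
      (fun r hr => (memP r).mpr (h ▸ Module.mem_annihilator.mpr hr))
    -- Q is a primitive ring: it has a faithful simple module in its own universe
    haveI ntM : Nontrivial M := by haveI := hM; exact IsSimpleModule.nontrivial R M
    obtain ⟨m₀, hm₀⟩ := exists_ne (0 : M)
    let φ : Q →ₗ[Q] M := LinearMap.toSpanSingleton Q M m₀
    have hφsurj : Function.Surjective φ := by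
      rw [← LinearMap.range_eq_top]
      rcases sM.1.eq_bot_or_eq_top (LinearMap.range φ) with hb | ht
      · exfalso
        apply hm₀
        have h1 : φ 1 ∈ LinearMap.range φ := LinearMap.mem_range_self φ 1
        rw [hb, Submodule.mem_bot] at h1
        rw [show φ 1 = m₀ from one_smul Q m₀] at h1
        exact h1
      · exact ht
    let e := φ.quotKerEquivOfSurjective hφsurj
    haveI : IsSimpleModule Q (Q ⧸ LinearMap.ker φ) := IsSimpleModule.congr e
    haveI : FaithfulSMul Q (Q ⧸ LinearMap.ker φ) := by
      constructor
      intro q₁ q₂ hq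
      apply fM.eq_of_smul_eq_smul (α := M)
      intro m
      obtain ⟨x, rfl⟩ := e.surjective m
      rw [← map_smul, ← map_smul, hq x]
    have hprim : IsPrimitiveRing Q :=
      ⟨Q ⧸ LinearMap.ker φ, inferInstance, inferInstance, inferInstance, inferInstance⟩
    obtain ⟨L, hL⟩ := hR P hprim
    obtain ⟨e₁⟩ := atom_equiv_simple hL sM fM
    obtain ⟨e₂⟩ := atom_equiv_simple hL sN fN
    let eQ : M ≃ₗ[Q] N := e₁.symm.trans e₂
    exact ⟨{ toFun := eQ, invFun := eQ.symm, left_inv := eQ.left_inv,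
             right_inv := eQ.right_inv, map_add' := eQ.map_add,
             map_smul' := fun r m => eQ.map_smul (π r) m }⟩
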